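/- arXiv:1902.01610 — 3 statements merged into one kernel-verified Lean document; each statement's English description precedes it below -/
import Mathlib

section
/- Let α be a generator of the multiplicative group of F_{p^n} and let T_n = ⟨α⟩ be embedded in GL_n(F_p) via a choice of F_p-basis of F_{p^n}. Then for any k, the centralizer of α^k in GL_n(F_p) has order |GL_{m_k}(F_{p^{d_k}})|, where d_k is the cardinality of the Frobenius orbit {α^k, α^{pk}, ..., α^{p^{n-1}k}} and m_k = n/d_k. -/
open scoped MatrixGroups Classical


open Polynomial

variable {p : ℕ} [Fact p.Prime] {K : Type*} [Field K] [CharP K p]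
  [Algebra (ZMod p) K] [Finite K]

/-- fixed points of the `t`-th Frobenius iterate, as an intermediate field -/
noncomputable def frobFixed (p : ℕ) [Fact p.Prime] (K : Type*) [Field K] [CharP K p]
    [Algebra (ZMod p) K] (t : ℕ) : IntermediateField (ZMod p) K :=
  Subfield.toIntermediateField
    { carrier := {x : K | x ^ p ^ t = x}
      mul_mem' := fun {a b} ha hb => by
        simp only [Set.mem_setOf_eq] at *; rw [mul_pow, ha, hb]
      one_mem' := by simp
      add_mem' := fun {a b} ha hb => by
        simp only [Set.mem_setOf_eq] at *; rw [add_pow_char_pow, ha, hb]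
      zero_mem' := by
        simp [zero_pow (pow_ne_zero t (Fact.out : p.Prime).ne_zero)]
      neg_mem' := fun {a} ha => by
        simp only [Set.mem_setOf_eq] at *
        rw [neg_pow, neg_one_pow_char_pow, ha, neg_one_mul]
      inv_mem' := fun a ha => by
        simp only [Set.mem_setOf_eq] at *; rw [inv_pow, ha] }
    (fun r => by
      show (algebraMap (ZMod p) K r) ^ p ^ t = algebraMap (ZMod p) K r
      rw [← map_pow, ZMod.pow_card_pow])

lemma mem_frobFixed {t : ℕ} {x : K} : x ∈ frobFixed p K t ↔ x ^ p ^ t = x := Iff.rfl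

lemma finrank_frobFixed_le (t : ℕ) (ht : t ≠ 0) :
    Module.finrank (ZMod p) (frobFixed p K t) ≤ t := by
  classical
  haveI : Fintype K := Fintype.ofFinite K
  have hp1 : 1 < p := (Fact.out : p.Prime).one_lt
  have hcard : Fintype.card (frobFixed p K t) = p ^ Module.finrank (ZMod p) (frobFixed p K t) := by
    rw [Module.card_eq_pow_finrank (K := ZMod p), ZMod.card]
  have hle : Fintype.card (frobFixed p K t) ≤ p ^ t := by
    have h0 : (X ^ p ^ t - X : K[X]) ≠ 0 :=
      FiniteField.X_pow_card_pow_sub_X_ne_zero K ht hp1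
    have hsub : ((frobFixed p K t : Set K)).toFinset ⊆ (X ^ p ^ t - X : K[X]).roots.toFinset := by
      intro x hx
      rw [Set.mem_toFinset] at hx
      rw [Multiset.mem_toFinset, mem_roots h0]
      simp only [IsRoot, eval_sub, eval_pow, eval_X, sub_eq_zero]; exact hx
    calc Fintype.card (frobFixed p K t) = ((frobFixed p K t : Set K)).toFinset.card := by
          simp [Set.toFinset_card]
      _ ≤ (X ^ p ^ t - X : K[X]).roots.toFinset.card := Finset.card_le_card hsub
      _ ≤ Multiset.card (X ^ p ^ t - X : K[X]).roots := Multiset.toFinset_card_le _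
      _ ≤ (X ^ p ^ t - X : K[X]).natDegree := card_roots' _
      _ = p ^ t := FiniteField.X_pow_card_pow_sub_X_natDegree_eq K ht hp1
  rw [hcard] at hle
  exact (Nat.pow_le_pow_iff_right hp1).mp hle

lemma pow_pow_finrank_adjoin (β : K) :
    β ^ p ^ Module.finrank (ZMod p) (IntermediateField.adjoin (ZMod p) {β}) = β := by
  classical
  set F := IntermediateField.adjoin (ZMod p) {β} with hF
  haveI : Fintype F := Fintype.ofFinite F
  have hβF : β ∈ F := IntermediateField.mem_adjoin_simple_self (ZMod p) β
  have hcard : Fintype.card F = p ^ Module.finrank (ZMod p) F := by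
    rw [Module.card_eq_pow_finrank (K := ZMod p), ZMod.card]
  have := FiniteField.pow_card (⟨β, hβF⟩ : F)
  rw [hcard] at this
  have := congrArg (Subtype.val) this
  push_cast at this
  simpa using this

lemma finrank_le_of_le {E E' : IntermediateField (ZMod p) K} (h : E ≤ E') :
    Module.finrank (ZMod p) E ≤ Module.finrank (ZMod p) E' := by
  haveI : Module.Finite (ZMod p) ↥E' := Module.Finite.of_finite
  exact LinearMap.finrank_le_finrank_of_injective
    (f := (IntermediateField.inclusion h).toLinearMap)
    (IntermediateField.inclusion h).injective

open scoped Classical in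
lemma card_orbit_eq_finrank_adjoin (β : K) {n : ℕ}
    (hn : Module.finrank (ZMod p) K = n) :
    ((Finset.range n).image (fun i => β ^ p ^ i)).card
      = Module.finrank (ZMod p) (IntermediateField.adjoin (ZMod p) {β}) := by
  classical
  set F := IntermediateField.adjoin (ZMod p) {β} with hF
  set f := Module.finrank (ZMod p) F with hf
  have hf0 : 0 < f := Module.finrank_pos
  have hper : ∀ a : ℕ, β ^ p ^ (a + f) = β ^ p ^ a := by
    intro a
    rw [pow_add, mul_comm, pow_mul, pow_pow_finrank_adjoin β]
  have hperq : ∀ r q : ℕ, β ^ p ^ (r + f * q) = β ^ p ^ r := by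
    intro r q
    induction q with
    | zero => simp
    | succ q ih => rw [Nat.mul_succ, ← Nat.add_assoc, hper, ih]
  have hfn : f ≤ n := by
    rw [← hn]
    simpa using Submodule.finrank_le (Subalgebra.toSubmodule F.toSubalgebra)
  have himg : (Finset.range n).image (fun i => β ^ p ^ i)
      = (Finset.range f).image (fun i => β ^ p ^ i) := by
    apply Finset.Subset.antisymm
    · intro x hx
      rw [Finset.mem_image] at hx ⊢
      obtain ⟨i, hi, rfl⟩ := hx
      refine ⟨i % f, Finset.mem_range.mpr (Nat.mod_lt _ hf0), ?_⟩
      conv_rhs => rw [← Nat.mod_add_div i f, hperq]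
    · apply Finset.image_subset_image
      exact Finset.range_subset_range.mpr hfn
  have key : ∀ i j : ℕ, i < j → j < f → β ^ p ^ i = β ^ p ^ j → False := by
    intro i j hij hjf heq
    set t := j - i with htdef
    have ht0 : 0 < t := Nat.sub_pos_of_lt hij
    have htf : t < f := lt_of_le_of_lt (Nat.sub_le _ _) hjf
    have hβt : β ^ p ^ t = β := by
      have hinj : Function.Injective (iterateFrobenius K p i) :=
        (iterateFrobenius K p i).injective
      apply hinj
      rw [iterateFrobenius_def, iterateFrobenius_def, ← pow_mul, ← pow_add,
        Nat.sub_add_cancel hij.le, heq]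
    have hFle : F ≤ frobFixed p K t :=
      IntermediateField.adjoin_le_iff.mpr (Set.singleton_subset_iff.mpr hβt)
    have : f ≤ t :=
      le_trans (finrank_le_of_le hFle) (finrank_frobFixed_le t ht0.ne')
    omega
  rw [himg, Finset.card_image_of_injOn, Finset.card_range]
  intro i hi j hj hij
  rw [Finset.mem_coe, Finset.mem_range] at hi hj
  rcases Nat.lt_trichotomy i j with h | h | h
  · exact absurd (key i j h hj hij) (fun x => x)
  · exact h
  · exact absurd (key j i h hi hij.symm) (fun x => x)

lemma card_centralizer_congr {G H : Type*} [Group G] [Group H] (e : G ≃* H) (g : G) :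
    Nat.card (Subgroup.centralizer {g} : Subgroup G)
      = Nat.card (Subgroup.centralizer {e g} : Subgroup H) := by
  apply Nat.card_congr
  refine ⟨fun x => ⟨e x, ?_⟩, fun y => ⟨e.symm y, ?_⟩, fun x => ?_, fun y => ?_⟩
  · rw [Subgroup.mem_centralizer_singleton_iff]
    have h := Subgroup.mem_centralizer_singleton_iff.mp x.2
    rw [← map_mul, ← map_mul, h]
  · rw [Subgroup.mem_centralizer_singleton_iff]
    have h := Subgroup.mem_centralizer_singleton_iff.mp y.2
    apply e.injective
    rw [map_mul, map_mul, e.apply_symm_apply, h]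
  · simp
  · simp

lemma flinear_of_commute (β : K) (f : Module.End (ZMod p) K)
    (hf : f * LinearMap.mulLeft (ZMod p) β = LinearMap.mulLeft (ZMod p) β * f)
    (c : K) (hc : c ∈ IntermediateField.adjoin (ZMod p) {β}) :
    ∀ x : K, f (c * x) = c * f x := by
  induction hc using IntermediateField.adjoin_induction with
  | mem y hy =>
    intro x
    rcases Set.mem_singleton_iff.mp hy with rfl
    have := congrFun (congrArg DFunLike.coe hf) x
    simpa [Module.End.mul_apply, LinearMap.mulLeft_apply] using this
  | algebraMap r =>
    intro x
    rw [Algebra.algebraMap_eq_smul_one, smul_mul_assoc, one_mul, map_smul, smul_mul_assoc, one_mul]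
  | add y z hy hz ihy ihz =>
    intro x
    rw [add_mul, map_add, ihy, ihz, add_mul]
  | inv y hy ihy =>
    intro x
    rcases eq_or_ne y 0 with rfl | hy0
    · simp
    · have h1 := ihy (y⁻¹ * x)
      rw [← mul_assoc, mul_inv_cancel₀ hy0, one_mul] at h1
      rw [h1, ← mul_assoc, inv_mul_cancel₀ hy0, one_mul]
  | mul y z hy hz ihy ihz =>
    intro x
    rw [mul_assoc, ihy, ihz, ← mul_assoc]

/-- An endomorphism commuting with multiplication by `β` is `F_p(β)`-linear. -/
noncomputable def toEndF (β : K) (f : Module.End (ZMod p) K)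
    (hf : f * LinearMap.mulLeft (ZMod p) β = LinearMap.mulLeft (ZMod p) β * f) :
    Module.End (IntermediateField.adjoin (ZMod p) {β}) K where
  toFun := f
  map_add' := f.map_add
  map_smul' := fun c x => by
    have h := flinear_of_commute β f hf c.val c.2 x
    show f (c • x) = c • f x
    rw [Algebra.smul_def, Algebra.smul_def]
    exact h

lemma card_centralizer_units (β : K) (u : (Module.End (ZMod p) K)ˣ)
    (hu : u.val = LinearMap.mulLeft (ZMod p) β) :
    Nat.card (Subgroup.centralizer {u} : Subgroup (Module.End (ZMod p) K)ˣ)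
      = Nat.card (Module.End (IntermediateField.adjoin (ZMod p) {β}) K)ˣ := by
  have hβF : β ∈ IntermediateField.adjoin (ZMod p) {β} :=
    IntermediateField.mem_adjoin_simple_self (ZMod p) β
  have memiff : ∀ x : (Module.End (ZMod p) K)ˣ, x ∈ Subgroup.centralizer {u} ↔
      x.val * LinearMap.mulLeft (ZMod p) β = LinearMap.mulLeft (ZMod p) β * x.val := by
    intro x
    rw [Subgroup.mem_centralizer_singleton_iff]
    constructor
    · intro h; have h2 := congrArg Units.val h; rw [Units.val_mul, Units.val_mul, hu] at h2
      exact h2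
    · intro h; apply Units.ext; rw [Units.val_mul, Units.val_mul, hu]; exact h
  apply Nat.card_congr
  refine ⟨fun x => ⟨toEndF β x.1.val ((memiff x.1).mp x.2),
                   toEndF β x.1⁻¹.val ((memiff x.1⁻¹).mp (Subgroup.inv_mem _ x.2)),
                   LinearMap.ext fun y => DFunLike.congr_fun x.1.mul_inv y,
                   LinearMap.ext fun y => DFunLike.congr_fun x.1.inv_mul y⟩,
          fun w => ⟨⟨w.val.restrictScalars (ZMod p), w⁻¹.val.restrictScalars (ZMod p),
                     LinearMap.ext fun y => DFunLike.congr_fun w.mul_inv y,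
                     LinearMap.ext fun y => DFunLike.congr_fun w.inv_mul y⟩,
                    (memiff _).mpr (LinearMap.ext fun y => ?_)⟩,
          fun x => Subtype.ext (Units.ext (LinearMap.ext fun y => rfl)),
          fun w => Units.ext (LinearMap.ext fun y => rfl)⟩
  show w.val (β * y) = β * w.val y
  have := w.val.map_smul (⟨β, hβF⟩ : IntermediateField.adjoin (ZMod p) {β}) y
  rw [Algebra.smul_def, Algebra.smul_def] at this
  exact this

set_option synthInstance.maxHeartbeats 1000000 in
/-- Let `α` be a generator of `F_{p^n}ˣ` and embed `T_n = ⟨α⟩` into `GL n (F_p)` via a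
choice of `F_p`-basis of `F_{p^n}` (so that `α ^ k` acts by multiplication).  Then the
centralizer of (the image of) `α ^ k` has order `|GL m (F_{p^d})|`, where `d` is the
cardinality of the Frobenius orbit of `α ^ k` and `m = n / d`. -/
theorem card_centralizer_eq (p n : ℕ) [Fact p.Prime] (hn : 0 < n)
    (α : (GaloisField p n)ˣ) (hα : ∀ x : (GaloisField p n)ˣ, x ∈ Subgroup.zpowers α)
    (b : Module.Basis (Fin n) (ZMod p) (GaloisField p n))
    (k : ℕ) (g : GL (Fin n) (ZMod p))
    (hg : (g : Matrix (Fin n) (Fin n) (ZMod p)) =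
      LinearMap.toMatrix b b (LinearMap.mulLeft (ZMod p) ((α : GaloisField p n) ^ k)))
    (d m : ℕ)
    (hd : d = ((Finset.range n).image (fun i => (α : GaloisField p n) ^ (k * p ^ i))).card)
    (hm : n = d * m) :
    Nat.card (Subgroup.centralizer {g} : Subgroup (GL (Fin n) (ZMod p))) =
      Nat.card (GL (Fin m) (GaloisField p d)) := by
  haveI : CharP (GaloisField p n) p :=
    charP_of_injective_algebraMap (algebraMap (ZMod p) (GaloisField p n)).injective p
  set β : GaloisField p n := (α : GaloisField p n) ^ k with hβ
  set F := IntermediateField.adjoin (ZMod p) {β} with hF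
  have hdf : d = Module.finrank (ZMod p) F := by
    rw [hd]
    have hfun : (fun i => (α : GaloisField p n) ^ (k * p ^ i)) = fun i => β ^ p ^ i := by
      funext i; rw [hβ, ← pow_mul]
    rw [hfun]
    exact card_orbit_eq_finrank_adjoin β (GaloisField.finrank p hn.ne')
  have hd0 : 0 < d := by rw [hdf]; exact Module.finrank_pos
  haveI : Module.Finite F (GaloisField p n) := Module.Finite.of_finite
  have hmk : Module.finrank F (GaloisField p n) = m := by
    have h1 := Module.finrank_mul_finrank (ZMod p) F (GaloisField p n)
    rw [GaloisField.finrank p hn.ne', ← hdf] at h1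
    exact Nat.eq_of_mul_eq_mul_left hd0 (h1.trans hm)
  let ψ : GL (Fin n) (ZMod p) ≃* (Module.End (ZMod p) (GaloisField p n))ˣ :=
    Units.mapEquiv (LinearMap.toMatrixAlgEquiv b).symm.toRingEquiv.toMulEquiv
  have hψg : (ψ g).val = LinearMap.mulLeft (ZMod p) β := by
    show (LinearMap.toMatrixAlgEquiv b).symm (g : Matrix (Fin n) (Fin n) (ZMod p)) = _
    rw [AlgEquiv.symm_apply_eq, hg]
    rfl
  rw [card_centralizer_congr ψ g, card_centralizer_units β (ψ g) hψg]
  let bF : Module.Basis (Fin m) F (GaloisField p n) := Module.finBasisOfFinrankEq F _ hmk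
  let e3 : (Module.End F (GaloisField p n))ˣ ≃* (Matrix (Fin m) (Fin m) F)ˣ :=
    Units.mapEquiv (LinearMap.toMatrixAlgEquiv bF).toRingEquiv.toMulEquiv
  rw [Nat.card_congr e3.toEquiv]
  haveI : Fintype F := Fintype.ofFinite F
  haveI : Fintype (GaloisField p d) := Fintype.ofFinite _
  have hcF : Fintype.card F = p ^ d := by
    rw [Module.card_eq_pow_finrank (K := ZMod p), ZMod.card, hdf]
  have hcG : Fintype.card (GaloisField p d) = p ^ d := by
    rw [Fintype.card_eq_nat_card, GaloisField.card _ _ hd0.ne']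
  have h1 := Matrix.card_GL_field (𝔽 := F) m
  have h2 := Matrix.card_GL_field (𝔽 := GaloisField p d) m
  rw [hcF] at h1
  rw [hcG] at h2
  exact h1.trans h2.symm
end

section
/- With notation as above, the value of the induced class function Ind_{T_n}^{GL_n(F_p)}(1_{α^k}) at the element α^k equals |GL_{m_k}(F_{p^{d_k}})| / (p^n - 1), where 1_{α^k} is the indicator class function of α^k on T_n, d_k is the size of the Frobenius orbit of α^k and m_k = n/d_k. -/
open scoped MatrixGroups Classical

lemma frob_iterate_pow {V : Type*} [CommMonoid V] (p : ℕ) (β : V) (i : ℕ) :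
    (fun x : V => x ^ p)^[i] β = β ^ p ^ i := by
  induction i with
  | zero => simp
  | succ i ih => rw [Function.iterate_succ_apply', ih, ← pow_mul, pow_succ]

lemma frob_orbit_card (p : ℕ) [Fact p.Prime] {V : Type*} [Field V] [Fintype V]
    [Algebra (ZMod p) V] {n : ℕ} (hn : 0 < n) (hfr : Module.finrank (ZMod p) V = n) (β : V) :
    ((Finset.range n).image (fun i => β ^ p ^ i)).card
      = Module.finrank (ZMod p) (IntermediateField.adjoin (ZMod p) {β}) := by
  have hp1 : 1 < p := (Fact.out : p.Prime).one_lt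
  set F := ZMod p
  set E := IntermediateField.adjoin F {β} with hE
  haveI : FiniteDimensional F V := Module.Finite.of_basis (Module.finBasis F V)
  haveI : Fintype E := Fintype.ofFinite E
  set e := Module.finrank F E with he
  have hcardV : Fintype.card V = p ^ n := by
    rw [Module.card_eq_pow_finrank (K := F), ZMod.card, hfr]
  have hcardE : Fintype.card E = p ^ e := by
    rw [Module.card_eq_pow_finrank (K := F), ZMod.card]
  set f : V → V := fun x => x ^ p with hf
  -- periodicity facts
  have hβE : β ∈ E := IntermediateField.mem_adjoin_simple_self F β
  have hpn : Function.IsPeriodicPt f n β := by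
    show f^[n] β = β
    rw [frob_iterate_pow, ← hcardV]
    exact FiniteField.pow_card β
  have hpe : Function.IsPeriodicPt f e β := by
    show f^[e] β = β
    rw [frob_iterate_pow, ← hcardE]
    have h2 := congrArg (Subtype.val) (FiniteField.pow_card (⟨β, hβE⟩ : E))
    simpa using h2
  have hepos : 0 < e := Module.finrank_pos
  set T := Function.minimalPeriod f β with hT
  have hTdvd_e : T ∣ e := hpe.minimalPeriod_dvd
  have hTdvd_n : T ∣ n := hpn.minimalPeriod_dvd
  have hTpos : 0 < T := hpe.minimalPeriod_pos hepos
  -- every element of E is fixed by f^[T]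
  have hβT : β ^ p ^ T = β := by
    rw [← frob_iterate_pow]
    exact Function.iterate_minimalPeriod
  -- every element of E is fixed by x ↦ x ^ p ^ T
  haveI : CharP V p := charP_of_injective_algebraMap (algebraMap (ZMod p) V).injective p
  have hEfix : ∀ x ∈ E, x ^ p ^ T = x := by
    have hint : IsIntegral F β := IsIntegral.of_finite F β
    intro x hx
    have hx' : x ∈ Algebra.adjoin F {β} := by
      rw [← IntermediateField.adjoin_simple_toSubalgebra_of_isAlgebraic hint.isAlgebraic]
      exact hx
    clear hx
    induction hx' using Algebra.adjoin_induction with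
    | mem z hz => rw [Set.mem_singleton_iff] at hz; rw [hz]; exact hβT
    | algebraMap r =>
        rw [← map_pow]
        congr 1
        rw [ZMod.pow_card_pow]
    | add x y hx hy ihx ihy => rw [add_pow_char_pow, ihx, ihy]
    | mul x y hx hy ihx ihy => rw [mul_pow, ihx, ihy]
  -- hence card E ≤ p ^ T
  have hcard_le : Fintype.card E ≤ p ^ T := by
    classical
    set q : Polynomial V := Polynomial.X ^ p ^ T - Polynomial.X with hq
    have hdeg : q.natDegree = p ^ T := by
      have h1 : (Polynomial.X : Polynomial V).natDegree < (Polynomial.X ^ p ^ T : Polynomial V).natDegree := by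
        rw [Polynomial.natDegree_X, Polynomial.natDegree_X_pow]
        exact Nat.one_lt_pow hTpos.ne' hp1
      rw [hq, Polynomial.natDegree_sub_eq_left_of_natDegree_lt h1, Polynomial.natDegree_X_pow]
    have hq0 : q ≠ 0 := by
      intro h
      rw [h, Polynomial.natDegree_zero] at hdeg
      have : 0 < p ^ T := pow_pos (by omega) T
      omega
    have hsub : Finset.univ.image (fun x : E => (x : V)) ⊆ q.roots.toFinset := by
      intro y hy
      simp only [Finset.mem_image] at hy
      obtain ⟨x, -, rfl⟩ := hy
      rw [Multiset.mem_toFinset, Polynomial.mem_roots hq0]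
      have := hEfix x x.2
      simp [hq, Polynomial.IsRoot, this]
    calc Fintype.card E = (Finset.univ.image (fun x : E => (x : V))).card := by
          rw [Finset.card_image_of_injective _ Subtype.val_injective, Finset.card_univ]
      _ ≤ q.roots.toFinset.card := Finset.card_le_card hsub
      _ ≤ Multiset.card q.roots := q.roots.toFinset_card_le
      _ ≤ q.natDegree := q.card_roots'
      _ = p ^ T := hdeg
  have heT : e = T := by
    have h1 : T ≤ e := Nat.le_of_dvd hepos hTdvd_e
    have h2 : e ≤ T := by
      rw [hcardE] at hcard_le
      exact (Nat.pow_le_pow_iff_right hp1).mp hcard_le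
    omega
  -- now compute the card of the image
  have himg : (Finset.range n).image (fun i => β ^ p ^ i)
      = (Finset.range T).image (fun i => f^[i] β) := by
    apply Finset.Subset.antisymm
    · intro y hy
      simp only [Finset.mem_image, Finset.mem_range] at hy ⊢
      obtain ⟨i, hi, rfl⟩ := hy
      exact ⟨i % T, Nat.mod_lt _ hTpos, by rw [Function.iterate_mod_minimalPeriod_eq, frob_iterate_pow]⟩
    · intro y hy
      simp only [Finset.mem_image, Finset.mem_range] at hy ⊢
      obtain ⟨i, hi, rfl⟩ := hy
      exact ⟨i, lt_of_lt_of_le hi (Nat.le_of_dvd hn hTdvd_n), by rw [frob_iterate_pow]⟩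
  rw [himg, Finset.card_image_of_injOn, Finset.card_range, ← heT]
  intro i hi j hj hij
  exact Function.iterate_injOn_Iio_minimalPeriod (by simpa using hi) (by simpa using hj) hij

/-- Linearization: an `F`-linear endomorphism commuting with multiplication by `β` commutes
with multiplication by every element of `F⟮β⟯`. -/
lemma comm_of_comm_gen {F V : Type*} [Field F] [Field V] [Algebra F V]
    [FiniteDimensional F V] {β : V} (f : Module.End F V)
    (hf : ∀ x, f (β * x) = β * f x) :
    ∀ c ∈ IntermediateField.adjoin F {β}, ∀ x, f (c * x) = c * f x := by
  intro c hc
  have hint : IsIntegral F β := IsIntegral.of_finite F β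
  have hc' : c ∈ Algebra.adjoin F {β} := by
    rw [← IntermediateField.adjoin_simple_toSubalgebra_of_isAlgebraic hint.isAlgebraic]; exact hc
  clear hc
  induction hc' using Algebra.adjoin_induction with
  | mem z hz => rw [Set.mem_singleton_iff] at hz; subst hz; exact hf
  | algebraMap r => intro x; rw [← Algebra.smul_def, f.map_smul, Algebra.smul_def]
  | add x y hx hy ihx ihy => intro t; rw [add_mul, map_add, ihx, ihy, add_mul]
  | mul x y hx hy ihx ihy =>
      intro t; rw [mul_assoc, ihx (y * t), ihy t, ← mul_assoc]

set_option maxHeartbeats 2000000 in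
set_option synthInstance.maxHeartbeats 1000000 in
/-- With `T_n = ⟨α⟩ ⊂ GL n (F_p)` (via an `F_p`-basis of `F_{p^n}`), the induced class
function `Ind_{T_n}^{GL_n(F_p)}(1_{α^k})`, evaluated at (the image of) `α ^ k`, equals
`|GL_{m}(F_{p^{d}})| / (p^n - 1)`.  Here the value of the induced class function at
`α^k` is `(1/|T_n|) ∑_{h ∈ GL_n(F_p), h α^k h⁻¹ ∈ T_n} 1_{α^k}(h α^k h⁻¹)`, which
simplifies to the sum below, `d` is the size of the Frobenius orbit of `α^k` and
`m = n / d`. -/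
theorem induced_indicator_value (p n : ℕ) [Fact p.Prime] (hn : 0 < n)
    (α : (GaloisField p n)ˣ) (hα : ∀ x : (GaloisField p n)ˣ, x ∈ Subgroup.zpowers α)
    (b : Module.Basis (Fin n) (ZMod p) (GaloisField p n))
    (k : ℕ) (g : GL (Fin n) (ZMod p))
    (hg : (g : Matrix (Fin n) (Fin n) (ZMod p)) =
      LinearMap.toMatrix b b (LinearMap.mulLeft (ZMod p) ((α : GaloisField p n) ^ k)))
    (d m : ℕ)
    (hd : d = ((Finset.range n).image (fun i => (α : GaloisField p n) ^ (k * p ^ i))).card)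
    (hm : n = d * m) :
    (1 / ((p : ℂ) ^ n - 1)) *
        ∑ h : GL (Fin n) (ZMod p), (if h * g * h⁻¹ = g then (1 : ℂ) else 0) =
      (Nat.card (GL (Fin m) (GaloisField p d)) : ℂ) / ((p : ℂ) ^ n - 1) := by
  classical
  set V := GaloisField p n with hV
  set β : V := (α : V) ^ k with hβ
  haveI : Fintype V := Fintype.ofFinite V
  haveI : FiniteDimensional (ZMod p) V := Module.Finite.of_basis b
  have hfr : Module.finrank (ZMod p) V = n := by
    rw [Module.finrank_eq_card_basis b, Fintype.card_fin]
  set E := IntermediateField.adjoin (ZMod p) {β} with hE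
  haveI : Fintype E := Fintype.ofFinite E
  have hdE : d = Module.finrank (ZMod p) E := by
    rw [hd, ← frob_orbit_card p hn hfr β]
    congr 1
    apply Finset.image_congr
    intro i _
    exact pow_mul _ k _
  have hd0 : 0 < d := hdE ▸ Module.finrank_pos
  haveI : FiniteDimensional E V := FiniteDimensional.right (ZMod p) E V
  have hms : Module.finrank E V = m := by
    have h1 : Module.finrank (ZMod p) E * Module.finrank E V = Module.finrank (ZMod p) V :=
      Module.finrank_mul_finrank _ _ _
    rw [hfr, ← hdE] at h1
    exact Nat.eq_of_mul_eq_mul_left hd0 (h1.trans hm)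
  have hcardE : Fintype.card E = p ^ d := by
    rw [Module.card_eq_pow_finrank (K := ZMod p), ZMod.card, hdE]
  -- Step 1: the sum counts the centralizer
  have hsum : (∑ h : GL (Fin n) (ZMod p), if h * g * h⁻¹ = g then (1 : ℂ) else 0)
      = (Nat.card {h : GL (Fin n) (ZMod p) // h * g = g * h} : ℂ) := by
    rw [Finset.sum_boole]
    norm_cast
    rw [Nat.card_eq_fintype_card, Fintype.card_subtype]
    congr 1
    apply Finset.filter_congr
    intro h _
    exact mul_inv_eq_iff_eq_mul
  -- the master cardinality identity
  have hβE : β ∈ E := IntermediateField.mem_adjoin_simple_self (ZMod p) β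
  have hsmulE : ∀ (c : E) (x : V), c • x = (c : V) * x := fun c x => rfl
  have hcard : Nat.card {h : GL (Fin n) (ZMod p) // h * g = g * h}
      = Nat.card (GL (Fin m) (GaloisField p d)) := by
    set A := LinearMap.toMatrixAlgEquiv b with hA
    set Φ : (Matrix (Fin n) (Fin n) (ZMod p))ˣ ≃* (Module.End (ZMod p) V)ˣ :=
      Units.mapEquiv A.symm.toRingEquiv.toMulEquiv with hΦ
    set G : (Module.End (ZMod p) V)ˣ := Φ g with hG
    have hGval : (G : Module.End (ZMod p) V) = LinearMap.mulLeft (ZMod p) β := by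
      show A.symm (g : Matrix (Fin n) (Fin n) (ZMod p)) = _
      rw [hg]
      exact A.symm_apply_apply _
    -- elementwise commutation helper
    have hcomm : ∀ u : (Module.End (ZMod p) V)ˣ, u * G = G * u →
        ∀ x, (u : Module.End (ZMod p) V) (β * x) = β * (u : Module.End (ZMod p) V) x := by
      intro u hu x
      have h1 : (u : Module.End (ZMod p) V) * (G : Module.End (ZMod p) V)
          = (G : Module.End (ZMod p) V) * (u : Module.End (ZMod p) V) := by
        exact_mod_cast congrArg Units.val hu
      rw [hGval] at h1
      have := congrArg (fun w : Module.End (ZMod p) V => w x) h1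
      simpa [Module.End.mul_apply] using this
    -- E-linearization of a commuting endomorphism
    let Elin : ∀ (f : Module.End (ZMod p) V), (∀ x, f (β * x) = β * f x) → (V →ₗ[E] V) :=
      fun f hf =>
        { toFun := f
          map_add' := f.map_add
          map_smul' := fun c x => by
            simp only [RingHom.id_apply, hsmulE]
            exact comm_of_comm_gen f hf (c : V) c.2 x }
    let e2 : {u : (Module.End (ZMod p) V)ˣ // u * G = G * u} ≃ (Module.End E V)ˣ :=
      { toFun := fun u =>
          { val := Elin u.1.val (hcomm u.1 u.2)
            inv := Elin (↑u.1⁻¹) (hcomm u.1⁻¹ (Commute.inv_left u.2))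
            val_inv := LinearMap.ext fun x => by
              show (↑u.1 : Module.End (ZMod p) V) ((↑u.1⁻¹ : Module.End (ZMod p) V) x)
                = (1 : Module.End E V) x
              rw [← Module.End.mul_apply, Units.mul_inv, Module.End.one_apply, Module.End.one_apply]
            inv_val := LinearMap.ext fun x => by
              show (↑u.1⁻¹ : Module.End (ZMod p) V) ((↑u.1 : Module.End (ZMod p) V) x)
                = (1 : Module.End E V) x
              rw [← Module.End.mul_apply, Units.inv_mul, Module.End.one_apply, Module.End.one_apply] }
        invFun := fun w =>
          ⟨{ val := LinearMap.restrictScalars (ZMod p) (w.val : V →ₗ[E] V)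
             inv := LinearMap.restrictScalars (ZMod p) (↑w⁻¹ : V →ₗ[E] V)
             val_inv := LinearMap.ext fun x => by
               show (↑w : V →ₗ[E] V) ((↑w⁻¹ : V →ₗ[E] V) x) = (1 : Module.End (ZMod p) V) x
               rw [← Module.End.mul_apply, Units.mul_inv, Module.End.one_apply, Module.End.one_apply]
             inv_val := LinearMap.ext fun x => by
               show (↑w⁻¹ : V →ₗ[E] V) ((↑w : V →ₗ[E] V) x) = (1 : Module.End (ZMod p) V) x
               rw [← Module.End.mul_apply, Units.inv_mul, Module.End.one_apply,
                 Module.End.one_apply] }, by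
            apply Units.ext
            rw [Units.val_mul, Units.val_mul]
            apply LinearMap.ext
            intro x
            simp only [Module.End.mul_apply]
            show (↑w : V →ₗ[E] V) ((G : Module.End (ZMod p) V) x)
              = (G : Module.End (ZMod p) V) ((↑w : V →ₗ[E] V) x)
            rw [hGval, LinearMap.mulLeft_apply, ← hsmulE ⟨β, hβE⟩ x, map_smul,
              hsmulE ⟨β, hβE⟩]
            simp [LinearMap.mulLeft_apply]⟩
        left_inv := fun u => by
          apply Subtype.ext; apply Units.ext; apply LinearMap.ext; intro x; rfl
        right_inv := fun w => by
          apply Units.ext; apply LinearMap.ext; intro x; rfl }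
    set bE : Module.Basis (Fin m) E V := Module.finBasisOfFinrankEq E V hms with hbE
    haveI : Fintype (GaloisField p d) := Fintype.ofFinite _
    have hcardGF : Fintype.card (GaloisField p d) = p ^ d := by
      rw [← Nat.card_eq_fintype_card]; exact GaloisField.card p d hd0.ne'
    set ρ : E ≃+* GaloisField p d := FiniteField.ringEquivOfCardEq (by rw [hcardE, hcardGF]) with hρ
    set e3 : (Module.End E V)ˣ ≃* (Matrix (Fin m) (Fin m) (GaloisField p d))ˣ :=
      Units.mapEquiv ((LinearMap.toMatrixAlgEquiv bE).toRingEquiv.trans ρ.mapMatrix).toMulEquiv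
      with he3
    set e1 : {h : GL (Fin n) (ZMod p) // h * g = g * h}
        ≃ {u : (Module.End (ZMod p) V)ˣ // u * G = G * u} :=
      Φ.toEquiv.subtypeEquiv (fun h => by
        have hc : Φ.toEquiv h = Φ h := rfl
        rw [hc, hG, ← map_mul, ← map_mul]
        exact (EmbeddingLike.apply_eq_iff_eq Φ).symm) with he1
    exact Nat.card_congr ((e1.trans e2).trans e3.toEquiv)
  rw [hsum, hcard, one_div_mul_eq_div]
end

section
/- For a finite group G acting linearly on a finite-dimensional complex vector space W via a representation ρ, the Poincaré series of the invariants of the symmetric algebra, Σ_d dim (Sym^d W^*)^G · t^d, equals (1/|G|) Σ_{g ∈ G} 1/det(1 - t·ρ(g)^{-1}) (Molien's formula). -/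
open MvPolynomial Module

namespace MolienAux

variable {m : ℕ}

noncomputable def subA (A : Matrix (Fin m) (Fin m) ℂ) :
    MvPolynomial (Fin m) ℂ →ₐ[ℂ] MvPolynomial (Fin m) ℂ :=
  aeval (fun i => ∑ j, A i j • X j)

lemma subA_X (A : Matrix (Fin m) (Fin m) ℂ) (i : Fin m) :
    subA A (X i) = ∑ j, A i j • X j := aeval_X _ _

lemma subA_comp (A B : Matrix (Fin m) (Fin m) ℂ) (p : MvPolynomial (Fin m) ℂ) :
    subA A (subA B p) = subA (B * A) p := by
  have : (subA A).comp (subA B) = subA (B * A) := by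
    apply MvPolynomial.algHom_ext
    intro i
    simp [subA_X, map_sum, Matrix.mul_apply, Finset.smul_sum, smul_smul]
    rw [Finset.sum_comm]
    simp [Finset.sum_smul]
  exact DFunLike.congr_fun this p

lemma subA_one (p : MvPolynomial (Fin m) ℂ) : subA (1 : Matrix (Fin m) (Fin m) ℂ) p = p := by
  have : subA (1 : Matrix (Fin m) (Fin m) ℂ) = AlgHom.id ℂ _ := by
    apply MvPolynomial.algHom_ext
    intro i
    simp [subA_X, Matrix.one_apply, ite_smul]
  rw [this]; rfl

lemma subA_mem (A : Matrix (Fin m) (Fin m) ℂ) {d : ℕ} {p : MvPolynomial (Fin m) ℂ}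
    (hp : p ∈ homogeneousSubmodule (Fin m) ℂ d) :
    subA A p ∈ homogeneousSubmodule (Fin m) ℂ d := by
  rw [mem_homogeneousSubmodule] at hp ⊢
  have hg : ∀ i, (∑ j, A i j • (X j : MvPolynomial (Fin m) ℂ)).IsHomogeneous 1 := by
    intro i
    apply MvPolynomial.IsHomogeneous.sum Finset.univ (fun j => A i j • X j) 1
    intro j _
    rw [smul_eq_C_mul]
    simpa using (isHomogeneous_C (Fin m) (A i j)).mul (isHomogeneous_X ℂ j)
  have := MvPolynomial.IsHomogeneous.aeval (S := ℂ) (τ := Fin m) hp _ hg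
  simpa [subA] using this


-- the index finset for the monomial basis of degree d
abbrev mons (m d : ℕ) : Finset (Fin m →₀ ℕ) := Finset.finsuppAntidiag Finset.univ d

lemma mem_mons {d : ℕ} (k : Fin m →₀ ℕ) : k ∈ mons m d ↔ k.degree = d := by
  rw [Finset.mem_finsuppAntidiag]
  have hd : k.degree = Finset.univ.sum ⇑k := by
    rw [Finsupp.degree]
    exact Finset.sum_subset (Finset.subset_univ _)
      (fun i _ hi => Finsupp.notMem_support_iff.1 hi)
  constructor
  · rintro ⟨h, -⟩
    rw [hd]; exact h
  · intro h
    exact ⟨hd ▸ h, Finset.subset_univ _⟩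

lemma monomial_mem {d : ℕ} {k : Fin m →₀ ℕ} (hk : k ∈ mons m d) :
    (monomial k (1 : ℂ)) ∈ homogeneousSubmodule (Fin m) ℂ d := by
  rw [mem_homogeneousSubmodule]
  exact isHomogeneous_monomial _ ((mem_mons k).1 hk)

noncomputable def monBasis (m d : ℕ) :
    Basis (mons m d) ℂ (homogeneousSubmodule (Fin m) ℂ d) :=
  Basis.mk (v := fun k => ⟨monomial k.1 (1 : ℂ), monomial_mem k.2⟩)
    (by
      have h2 : LinearIndependent ℂ
          (fun k : mons m d => (monomial k.1 (1 : ℂ) : MvPolynomial (Fin m) ℂ)) := by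
        have := (basisMonomials (Fin m) ℂ).linearIndependent
        have := this.comp (fun k : mons m d => (k : Fin m →₀ ℕ)) Subtype.val_injective
        simp at this; exact this
      apply LinearIndependent.of_comp (homogeneousSubmodule (Fin m) ℂ d).subtype
      exact h2)
    (by
      rintro ⟨p, hp⟩ -
      have hmem : ∀ k ∈ p.support, k ∈ mons m d := by
        intro k hk
        rw [mem_mons, Finsupp.degree_eq_weight_one]
        rw [mem_homogeneousSubmodule] at hp
        exact hp (MvPolynomial.mem_support_iff.1 hk)
      have key : (⟨p, hp⟩ : homogeneousSubmodule (Fin m) ℂ d) =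
          ∑ k ∈ p.support.attach, coeff k.1 p •
            (⟨monomial k.1 (1 : ℂ), monomial_mem (hmem k.1 k.2)⟩ :
              homogeneousSubmodule (Fin m) ℂ d) := by
        apply Subtype.ext
        rw [Submodule.coe_sum]
        have : ∀ k ∈ p.support.attach,
            ((coeff k.1 p • (⟨monomial k.1 (1 : ℂ), monomial_mem (hmem k.1 k.2)⟩ :
              homogeneousSubmodule (Fin m) ℂ d) : homogeneousSubmodule (Fin m) ℂ d) :
                MvPolynomial (Fin m) ℂ) = monomial k.1 (coeff k.1 p) := by
          intro k _
          rw [Submodule.coe_smul]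
          simp [smul_monomial]
        rw [Finset.sum_congr rfl this, Finset.sum_attach p.support
          (fun k => monomial k (coeff k p))]
        exact (support_sum_monomial_coeff p).symm
      rw [key]
      apply Submodule.sum_mem
      intro k _
      apply Submodule.smul_mem
      apply Submodule.subset_span
      exact ⟨⟨k.1, hmem k.1 k.2⟩, rfl⟩)

lemma monBasis_apply {d : ℕ} (k : mons m d) :
    ((monBasis m d k : homogeneousSubmodule (Fin m) ℂ d) : MvPolynomial (Fin m) ℂ) =
      monomial k.1 (1 : ℂ) := by
  simp [monBasis]

instance (d : ℕ) : FiniteDimensional ℂ (homogeneousSubmodule (Fin m) ℂ d) :=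
  Module.Finite.of_basis (monBasis m d)


noncomputable def T (A : Matrix (Fin m) (Fin m) ℂ) (d : ℕ) :
    homogeneousSubmodule (Fin m) ℂ d →ₗ[ℂ] homogeneousSubmodule (Fin m) ℂ d :=
  ((subA A).toLinearMap).restrict (fun _ hp => subA_mem A hp)

lemma T_coe (A : Matrix (Fin m) (Fin m) ℂ) (d : ℕ)
    (p : homogeneousSubmodule (Fin m) ℂ d) :
    (T A d p : MvPolynomial (Fin m) ℂ) = subA A p := rfl

lemma T_mul (A B : Matrix (Fin m) (Fin m) ℂ) (d : ℕ) :
    T A d * T B d = T (B * A) d := by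
  apply LinearMap.ext
  intro p
  apply Subtype.ext
  show (T A d (T B d p) : MvPolynomial (Fin m) ℂ) = _
  rw [T_coe, T_coe, T_coe, subA_comp]

lemma T_one (d : ℕ) : T (1 : Matrix (Fin m) (Fin m) ℂ) d = 1 := by
  apply LinearMap.ext
  intro p
  apply Subtype.ext
  rw [T_coe, subA_one]
  rfl

lemma trace_T_conj {P Q : Matrix (Fin m) (Fin m) ℂ} (A : Matrix (Fin m) (Fin m) ℂ)
    (hQP : Q * P = 1) (d : ℕ) :
    LinearMap.trace ℂ _ (T (P * A * Q) d) = LinearMap.trace ℂ _ (T A d) := by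
  have h1 : T (P * A * Q) d = T Q d * (T A d * T P d) := by
    rw [T_mul, T_mul]
  rw [h1, LinearMap.trace_mul_comm, mul_assoc, T_mul, hQP, T_one, mul_one]

lemma trace_eq_sum_eigen {M : Type*} [AddCommGroup M] [Module ℂ M] {ι : Type*}
    [Fintype ι] [DecidableEq ι] (b : Basis ι ℂ M) (f : M →ₗ[ℂ] M) (mu : ι → ℂ)
    (h : ∀ i, f (b i) = mu i • b i) :
    LinearMap.trace ℂ M f = ∑ i, mu i := by
  rw [LinearMap.trace_eq_matrix_trace ℂ b, Matrix.trace]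
  apply Finset.sum_congr rfl
  intro i _
  rw [Matrix.diag_apply, LinearMap.toMatrix_apply, h i, map_smul]
  simp

lemma subA_diagonal_X (lam : Fin m → ℂ) (i : Fin m) :
    subA (Matrix.diagonal lam) (X i) = lam i • X i := by
  rw [subA_X]
  rw [Finset.sum_eq_single i]
  · simp
  · intro j _ hj
    simp [Matrix.diagonal_apply_ne' _ hj]
  · simp

lemma subA_diagonal_monomial (lam : Fin m → ℂ) (k : Fin m →₀ ℕ) :
    subA (Matrix.diagonal lam) (monomial k (1 : ℂ)) =
      (∏ i, lam i ^ k i) • monomial k (1 : ℂ) := by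
  have hX : ∀ i : Fin m, (∑ j, Matrix.diagonal lam i j • (X j : MvPolynomial (Fin m) ℂ)) =
      C (lam i) * X i := by
    intro i
    rw [← subA_X (Matrix.diagonal lam) i, subA_diagonal_X, smul_eq_C_mul]
  rw [subA, aeval_monomial, map_one, one_mul]
  have h1 : (k.prod fun i n => ((fun i => ∑ j, Matrix.diagonal lam i j •
      (X j : MvPolynomial (Fin m) ℂ)) i) ^ n) =
      k.prod (fun i n => (C (lam i) * X i) ^ n) :=
    Finsupp.prod_congr (fun i _ => by
      show (∑ j, Matrix.diagonal lam i j • (X j : MvPolynomial (Fin m) ℂ)) ^ k i = _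
      rw [hX i])
  rw [h1]
  calc k.prod (fun i n => ((C (lam i) : MvPolynomial (Fin m) ℂ) * X i) ^ n)
      = ∏ i ∈ k.support, (C (lam i) ^ k i * X i ^ k i) := by
        rw [Finsupp.prod]; exact Finset.prod_congr rfl fun i _ => mul_pow _ _ _
    _ = (∏ i ∈ k.support, (C (lam i) : MvPolynomial (Fin m) ℂ) ^ k i) *
        ∏ i ∈ k.support, (X i : MvPolynomial (Fin m) ℂ) ^ k i := Finset.prod_mul_distrib
    _ = C (∏ i ∈ k.support, lam i ^ k i) *
        ∏ i ∈ k.support, (X i : MvPolynomial (Fin m) ℂ) ^ k i := by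
        rw [map_prod]; simp [map_pow]
    _ = (∏ i, lam i ^ k i) • monomial k (1 : ℂ) := by
        rw [monomial_eq, map_one, one_mul, smul_eq_C_mul, Finsupp.prod]
        congr 2
        exact Finset.prod_subset (Finset.subset_univ _) (fun i _ hi => by
          simp [Finsupp.notMem_support_iff.1 hi])

lemma trace_T_diagonal (lam : Fin m → ℂ) (d : ℕ) :
    LinearMap.trace ℂ _ (T (Matrix.diagonal lam) d) =
      ∑ k ∈ mons m d, ∏ i, lam i ^ k i := by
  rw [trace_eq_sum_eigen (monBasis m d) _ (fun k => ∏ i, lam i ^ k.1 i) ?_]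
  · exact Finset.sum_coe_sort (mons m d) (fun k => ∏ i, lam i ^ k i)
  · intro k
    apply Subtype.ext
    rw [T_coe, monBasis_apply, Submodule.coe_smul, monBasis_apply, subA_diagonal_monomial]


lemma geom_mul (a : ℂ) :
    (PowerSeries.mk fun n => a ^ n) * (1 - PowerSeries.C a * PowerSeries.X) = 1 := by
  ext n
  cases n with
  | zero => simp
  | succ n =>
    rw [mul_sub, mul_one, map_sub]
    have h : (PowerSeries.mk fun n => a ^ n) * (PowerSeries.C a * PowerSeries.X) =
        (PowerSeries.mk fun n => a ^ n) * PowerSeries.X * PowerSeries.C a := by ring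
    rw [h, PowerSeries.coeff_mul_C, PowerSeries.coeff_succ_mul_X]
    simp [pow_succ]

lemma charpolyRev_diagonal (lam : Fin m → ℂ) :
    Matrix.charpolyRev (Matrix.diagonal lam) =
      ∏ i, (1 - Polynomial.C (lam i) * Polynomial.X) := by
  rw [Matrix.charpolyRev]
  have h : (1 : Matrix (Fin m) (Fin m) (Polynomial ℂ)) -
      (Polynomial.X : Polynomial ℂ) • (Matrix.diagonal lam).map Polynomial.C =
      Matrix.diagonal (fun i => 1 - Polynomial.C (lam i) * Polynomial.X) := by
    ext i j
    by_cases hij : i = j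
    · subst hij
      simp only [Matrix.sub_apply, Matrix.smul_apply, Matrix.map_apply,
        Matrix.one_apply_eq, Matrix.diagonal_apply_eq, smul_eq_mul]
      ring
    · simp [Matrix.one_apply_ne hij, Matrix.diagonal_apply_ne _ hij]
  rw [h, Matrix.det_diagonal]

lemma charpolyRev_conj {P Q : Matrix (Fin m) (Fin m) ℂ} (A : Matrix (Fin m) (Fin m) ℂ)
    (hPQ : P * Q = 1) :
    Matrix.charpolyRev (P * A * Q) = Matrix.charpolyRev A := by
  rw [Matrix.charpolyRev, Matrix.charpolyRev]
  set P' := P.map (Polynomial.C (R := ℂ))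
  set Q' := Q.map (Polynomial.C (R := ℂ))
  have hPQ' : P' * Q' = 1 := by
    rw [← Matrix.map_mul, hPQ, Matrix.map_one _ (map_zero _) (map_one _)]
  have h1 : (1 : Matrix (Fin m) (Fin m) (Polynomial ℂ)) -
      (Polynomial.X : Polynomial ℂ) • (P * A * Q).map Polynomial.C =
      P' * ((1 : Matrix (Fin m) (Fin m) (Polynomial ℂ)) -
        (Polynomial.X : Polynomial ℂ) • A.map Polynomial.C) * Q' := by
    rw [Matrix.map_mul, Matrix.map_mul]
    rw [mul_sub, sub_mul, mul_one, hPQ']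
    congr 1
    rw [mul_smul_comm, Matrix.smul_mul]
  rw [h1, Matrix.det_mul, Matrix.det_mul]
  have hdet : P'.det * Q'.det = 1 := by
    rw [← Matrix.det_mul, hPQ', Matrix.det_one]
  calc P'.det * ((1 - (Polynomial.X : Polynomial ℂ) • A.map Polynomial.C).det) * Q'.det
      = P'.det * Q'.det * (1 - (Polynomial.X : Polynomial ℂ) • A.map Polynomial.C).det := by ring
    _ = (1 - (Polynomial.X : Polynomial ℂ) • A.map Polynomial.C).det := by rw [hdet, one_mul]

lemma ps_diag (lam : Fin m → ℂ) :
    PowerSeries.mk (fun d => LinearMap.trace ℂ _ (T (Matrix.diagonal lam) d)) =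
      ((Matrix.charpolyRev (Matrix.diagonal lam) : Polynomial ℂ) : PowerSeries ℂ)⁻¹ := by
  rw [PowerSeries.eq_inv_iff_mul_eq_one]
  · have hmk : PowerSeries.mk (fun d => LinearMap.trace ℂ _ (T (Matrix.diagonal lam) d)) =
        ∏ i, PowerSeries.mk fun n => lam i ^ n := by
      ext d
      rw [PowerSeries.coeff_mk, PowerSeries.coeff_prod, trace_T_diagonal]
      apply Finset.sum_congr rfl
      intro k _
      simp
    have hpol : ((Matrix.charpolyRev (Matrix.diagonal lam) : Polynomial ℂ) : PowerSeries ℂ) =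
        ∏ i, (1 - PowerSeries.C (lam i) * PowerSeries.X) := by
      rw [charpolyRev_diagonal, ← Polynomial.coeToPowerSeries.ringHom_apply, map_prod]
      apply Finset.prod_congr rfl
      intro i _
      rw [Polynomial.coeToPowerSeries.ringHom_apply]
      push_cast
      rfl
    rw [hmk, hpol, ← Finset.prod_mul_distrib]
    simp [geom_mul]
  · have h0 : Polynomial.coeff (Matrix.charpolyRev (Matrix.diagonal lam)) 0 = 1 := by
      rw [Polynomial.coeff_zero_eq_eval_zero, Matrix.eval_charpolyRev]
    rw [Polynomial.constantCoeff_coe, h0]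
    exact one_ne_zero


lemma exists_diag {m : ℕ} (A : Matrix (Fin m) (Fin m) ℂ) {n : ℕ} (hn : 0 < n)
    (hA : A ^ n = 1) :
    ∃ (P Q : Matrix (Fin m) (Fin m) ℂ) (lam : Fin m → ℂ),
      P * Q = 1 ∧ Q * P = 1 ∧ A = P * Matrix.diagonal lam * Q := by
  classical
  set f : Module.End ℂ (Fin m → ℂ) := Matrix.toLinAlgEquiv' A with hf
  have haev : Polynomial.aeval f ((Polynomial.X : Polynomial ℂ) ^ n - 1) = 0 := by
    rw [map_sub, map_pow, Polynomial.aeval_X, map_one]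
    have : f ^ n = Matrix.toLinAlgEquiv' (A ^ n) := by
      show Matrix.toLinAlgEquiv' A ^ n = _
      rw [map_pow]
    rw [this, hA]
    simp [sub_eq_zero]
  have hsq : Squarefree ((Polynomial.X : Polynomial ℂ) ^ n - 1) := by
    apply Polynomial.Separable.squarefree
    rw [Polynomial.X_pow_sub_one_separable_iff]
    exact_mod_cast Nat.cast_ne_zero.mpr hn.ne'
  have hss : f.IsSemisimple :=
    Module.End.isSemisimple_of_squarefree_aeval_eq_zero hsq haev
  have hsup : ⨆ μ : ℂ, f.eigenspace μ = ⊤ := by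
    have h1 := Module.End.iSup_maxGenEigenspace_eq_top f
    calc ⨆ μ : ℂ, f.eigenspace μ = ⨆ μ : ℂ, f.maxGenEigenspace μ := by
          refine iSup_congr fun μ => ?_
          exact (hss.isFinitelySemisimple.maxGenEigenspace_eq_eigenspace μ).symm
      _ = ⊤ := h1
  have hind := f.eigenspaces_iSupIndep
  have hint : DirectSum.IsInternal (fun μ : ℂ => f.eigenspace μ) :=
    DirectSum.isInternal_submodule_of_iSupIndep_of_iSup_eq_top hind hsup
  let bE : ∀ μ : ℂ, Basis (Fin (finrank ℂ (f.eigenspace μ))) ℂ (f.eigenspace μ) :=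
    fun μ => finBasis ℂ (f.eigenspace μ)
  let b0 := hint.collectedBasis bE
  have hb0 : ∀ i, b0 i ∈ f.eigenspace i.1 := fun i => hint.collectedBasis_mem bE i
  let e := b0.indexEquiv (Pi.basisFun ℂ (Fin m))
  let b := b0.reindex e
  have hb : ∀ i : Fin m, f (b i) = (e.symm i).1 • b i := by
    intro i
    have := hb0 (e.symm i)
    rw [Module.End.mem_eigenspace_iff] at this
    simpa [b, Basis.reindex_apply] using this
  let lam : Fin m → ℂ := fun i => (e.symm i).1
  have hdiag : LinearMap.toMatrix b b f = Matrix.diagonal lam := by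
    ext i j
    rw [LinearMap.toMatrix_apply, hb j, map_smul]
    by_cases hij : i = j
    · subst hij
      simp [Matrix.diagonal_apply_eq, lam]
    · simp [Matrix.diagonal_apply_ne _ hij, Finsupp.single_apply, Ne.symm hij]
  let c : Basis (Fin m) ℂ (Fin m → ℂ) := Pi.basisFun ℂ (Fin m)
  have hA' : LinearMap.toMatrix c c f = A := by
    rw [hf]
    show LinearMap.toMatrix c c (Matrix.toLin' A) = A
    rw [LinearMap.toMatrix_eq_toMatrix', LinearMap.toMatrix'_toLin']
  refine ⟨c.toMatrix b, b.toMatrix c, lam, Basis.toMatrix_mul_toMatrix_flip _ _,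
    Basis.toMatrix_mul_toMatrix_flip _ _, ?_⟩
  rw [← hA', ← hdiag]
  rw [basis_toMatrix_mul_linearMap_toMatrix_mul_basis_toMatrix]


lemma ps_trace (A : Matrix (Fin m) (Fin m) ℂ) {n : ℕ} (hn : 0 < n) (hA : A ^ n = 1) :
    PowerSeries.mk (fun d => LinearMap.trace ℂ _ (T A d)) =
      ((Matrix.charpolyRev A : Polynomial ℂ) : PowerSeries ℂ)⁻¹ := by
  obtain ⟨P, Q, lam, hPQ, hQP, hAeq⟩ := exists_diag A hn hA
  have h1 : ∀ d, LinearMap.trace ℂ _ (T A d) =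
      LinearMap.trace ℂ _ (T (Matrix.diagonal lam) d) := by
    intro d; rw [hAeq]; exact trace_T_conj _ hQP d
  have h2 : Matrix.charpolyRev A = Matrix.charpolyRev (Matrix.diagonal lam) := by
    rw [hAeq]; exact charpolyRev_conj _ hPQ
  simp only [h1, h2]
  exact ps_diag lam

lemma finrank_invariants {G : Type*} [Group G] [Fintype G] {V : Type*} [AddCommGroup V]
    [Module ℂ V] [FiniteDimensional ℂ V] (τ : Representation ℂ G V) :
    (finrank ℂ τ.invariants : ℂ) =
      (Fintype.card G : ℂ)⁻¹ * ∑ g : G, LinearMap.trace ℂ V (τ g) := by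
  have hc : (Fintype.card G : ℂ) ≠ 0 := by
    exact_mod_cast Fintype.card_ne_zero
  have : Invertible (Fintype.card G : ℂ) := invertibleOfNonzero hc
  rw [← (Representation.isProj_averageMap τ).trace]
  rw [Representation.averageMap, GroupAlgebra.average, map_smul, map_smul]
  rw [map_sum, map_sum]
  rw [smul_eq_mul, invOf_eq_inv]
  congr 1
  apply Finset.sum_congr rfl
  intro g _
  rw [Representation.asAlgebraHom_of]

end MolienAux

open scoped MatrixGroups

/-- Molien's formula: for a finite group `G` acting on `W = ℂ^m` via `ρ`, with the
induced action `σ` on the polynomial ring `ℂ[x_1,…,x_m] = Sym W^*` (where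
`σ g` substitutes `x_i ↦ ∑_j (ρ g)⁻¹_{ij} x_j`), the Poincaré series
`∑_d dim (Sym^d W^*)^G t^d` of the invariants equals
`(1/|G|) ∑_{g ∈ G} 1 / det(1 - t ρ(g)⁻¹)`. -/
theorem molien_formula (G : Type*) [Group G] [Fintype G] (m : ℕ)
    (ρ : G →* Matrix.GeneralLinearGroup (Fin m) ℂ)
    (σ : Representation ℂ G (MvPolynomial (Fin m) ℂ))
    (hσ : ∀ (g : G) (q : MvPolynomial (Fin m) ℂ),
      σ g q = MvPolynomial.aeval
        (fun i => ∑ j, ((((ρ g)⁻¹ : Matrix.GeneralLinearGroup (Fin m) ℂ) :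
          Matrix (Fin m) (Fin m) ℂ) i j) • MvPolynomial.X j) q) :
    PowerSeries.mk (fun d => (Module.finrank ℂ
        ↥(σ.invariants ⊓ MvPolynomial.homogeneousSubmodule (Fin m) ℂ d) : ℂ)) =
      (Fintype.card G : ℂ)⁻¹ •
        ∑ g : G, ((Matrix.charpolyRev
          (((ρ g)⁻¹ : Matrix.GeneralLinearGroup (Fin m) ℂ) :
            Matrix (Fin m) (Fin m) ℂ) : Polynomial ℂ) : PowerSeries ℂ)⁻¹ := by
  classical
  set A : G → Matrix (Fin m) (Fin m) ℂ := fun g =>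
    (((ρ g)⁻¹ : Matrix.GeneralLinearGroup (Fin m) ℂ) : Matrix (Fin m) (Fin m) ℂ) with hAdef
  have hAmul : ∀ g h : G, A (g * h) = A h * A g := by
    intro g h
    simp only [hAdef, map_mul, mul_inv_rev, Units.val_mul]
  have hAone : A 1 = 1 := by simp [hAdef]
  have hApow : ∀ g : G, A g ^ Fintype.card G = 1 := by
    intro g
    have h1 : A g ^ Fintype.card G = (((ρ g)⁻¹ ^ Fintype.card G :
        Matrix.GeneralLinearGroup (Fin m) ℂ) : Matrix (Fin m) (Fin m) ℂ) := by
      rw [Units.val_pow_eq_pow_val]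
    have h2 : ((ρ g)⁻¹) ^ Fintype.card G = (1 : Matrix.GeneralLinearGroup (Fin m) ℂ) := by
      rw [inv_pow, ← map_pow, pow_card_eq_one, map_one, inv_one]
    rw [h1, h2, Units.val_one]
  let σd : ∀ _ : ℕ, Representation ℂ G (homogeneousSubmodule (Fin m) ℂ _) := fun d =>
    { toFun := fun g => MolienAux.T (A g) d
      map_one' := by
        show MolienAux.T (A 1) d = 1
        rw [hAone]; exact MolienAux.T_one d
      map_mul' := fun g h => by
        show MolienAux.T (A (g * h)) d = MolienAux.T (A g) d * MolienAux.T (A h) d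
        rw [hAmul]; exact (MolienAux.T_mul (A g) (A h) d).symm }
  have hsub : ∀ (g : G) (q : MvPolynomial (Fin m) ℂ), σ g q = MolienAux.subA (A g) q :=
    fun g q => hσ g q
  have hmap : ∀ d : ℕ, Submodule.map (homogeneousSubmodule (Fin m) ℂ d).subtype
      (σd d).invariants = σ.invariants ⊓ homogeneousSubmodule (Fin m) ℂ d := by
    intro d
    apply le_antisymm
    · rintro x ⟨y, hy, rfl⟩
      refine ⟨?_, y.2⟩
      intro g
      rw [hsub g]
      have := congrArg Subtype.val (hy g)
      exact this
    · rintro x ⟨hx1, hx2⟩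
      refine ⟨⟨x, hx2⟩, fun g => Subtype.ext ?_, rfl⟩
      show ((MolienAux.T (A g) d ⟨x, hx2⟩ : homogeneousSubmodule (Fin m) ℂ d) :
        MvPolynomial (Fin m) ℂ) = x
      rw [MolienAux.T_coe, ← hsub g]
      exact hx1 g
  refine PowerSeries.ext fun d => ?_
  rw [PowerSeries.coeff_mk]
  have hps : ∀ g : G, ((Matrix.charpolyRev (A g) : Polynomial ℂ) : PowerSeries ℂ)⁻¹ =
      PowerSeries.mk (fun e => LinearMap.trace ℂ _ (MolienAux.T (A g) e)) :=
    fun g => (MolienAux.ps_trace (A g) Fintype.card_pos (hApow g)).symm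
  calc ((finrank ℂ ↥(σ.invariants ⊓ homogeneousSubmodule (Fin m) ℂ d) : ℂ))
      = ((finrank ℂ (σd d).invariants : ℂ)) := by
        rw [← hmap d, Submodule.finrank_map_subtype_eq]
    _ = (Fintype.card G : ℂ)⁻¹ * ∑ g : G, LinearMap.trace ℂ _ ((σd d) g) :=
        MolienAux.finrank_invariants (σd d)
    _ = (PowerSeries.coeff d) ((Fintype.card G : ℂ)⁻¹ •
        ∑ g : G, ((Matrix.charpolyRev (A g) : Polynomial ℂ) : PowerSeries ℂ)⁻¹) := by
      rw [map_smul, map_sum]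
      simp only [hps, PowerSeries.coeff_mk, smul_eq_mul]
      rfl
end
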